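/- For any positive definite Hermitian ρ and Hermitian X, the supremum of |tr(Xτ)| over all Hermitian τ with ∥τ∥_ρ = 1 equals sqrt(tr((ρ^{1/2} X ρ^{1/2})²)), i.e., the dual norm of the local norm ∥·∥_ρ is ∥X∥_{ρ,*} = sqrt(tr((ρX)²)). -/

import Mathlib

open Matrix
open scoped ComplexOrder

/-- The square root of a positive semidefinite matrix, as defined in the older Mathlib
(`Matrix.PosSemidef.sqrt`, removed since). -/
noncomputable def Matrix.PosSemidef.sqrt {n 𝕜 : Type*} [Fintype n] [DecidableEq n] [RCLike 𝕜]
    {A : Matrix n n 𝕜} (hA : A.PosSemidef) : Matrix n n 𝕜 :=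
  hA.1.eigenvectorUnitary.1 * diagonal ((↑) ∘ (√·) ∘ hA.1.eigenvalues) *
    (star hA.1.eigenvectorUnitary : Matrix n n 𝕜)


lemma Matrix.PosSemidef.sqrt_isHermitian' {n : ℕ} {A : Matrix (Fin n) (Fin n) ℂ}
    (hA : A.PosSemidef) : hA.sqrt.IsHermitian := by
  unfold Matrix.IsHermitian Matrix.PosSemidef.sqrt
  rw [conjTranspose_mul, conjTranspose_mul, diagonal_conjTranspose]
  simp only [← star_eq_conjTranspose, star_star, Matrix.mul_assoc]
  have hst : star ((RCLike.ofReal : ℝ → ℂ) ∘ (√·) ∘ hA.1.eigenvalues) = (RCLike.ofReal : ℝ → ℂ) ∘ (√·) ∘ hA.1.eigenvalues := by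
    funext i; simp
  rw [hst]

lemma Matrix.PosSemidef.sqrt_mul_self {n : ℕ} {A : Matrix (Fin n) (Fin n) ℂ}
    (hA : A.PosSemidef) : hA.sqrt * hA.sqrt = A := by
  have hU : (star hA.1.eigenvectorUnitary : Matrix (Fin n) (Fin n) ℂ) * hA.1.eigenvectorUnitary.1 = 1 :=
    Unitary.star_mul_self_of_mem hA.1.eigenvectorUnitary.2
  have hD : diagonal (((↑) ∘ (√·) ∘ hA.1.eigenvalues) : Fin n → ℂ) * diagonal ((↑) ∘ (√·) ∘ hA.1.eigenvalues)
      = diagonal (RCLike.ofReal ∘ hA.1.eigenvalues) := by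
    rw [diagonal_mul_diagonal]
    congr 1; funext i
    simp only [Function.comp_apply]
    rw [← Complex.ofReal_mul, Real.mul_self_sqrt (hA.eigenvalues_nonneg i)]
    rfl
  conv_rhs => rw [hA.1.spectral_theorem]
  unfold Matrix.PosSemidef.sqrt
  calc _ = hA.1.eigenvectorUnitary.1 * diagonal ((↑) ∘ (√·) ∘ hA.1.eigenvalues) *
      ((star hA.1.eigenvectorUnitary : Matrix (Fin n) (Fin n) ℂ) * hA.1.eigenvectorUnitary.1) *
      diagonal ((↑) ∘ (√·) ∘ hA.1.eigenvalues) * (star hA.1.eigenvectorUnitary : Matrix (Fin n) (Fin n) ℂ) := by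
        simp only [Matrix.mul_assoc]; rfl
    _ = _ := by
      rw [hU, Matrix.mul_one, Matrix.mul_assoc _ (diagonal _) (diagonal _), hD]
      simp [Unitary.conjStarAlgAut_apply]

lemma herm_trace_sq {n : ℕ} {H : Matrix (Fin n) (Fin n) ℂ} (hH : H.IsHermitian) :
    Matrix.trace (H ^ 2) = ((∑ i, ∑ j, Complex.normSq (H i j) : ℝ) : ℂ) := by
  rw [pow_two]
  have : ∀ i j, H i j * H j i = ((Complex.normSq (H i j) : ℝ) : ℂ) := by
    intro i j
    rw [show H j i = star (H i j) from (hH.apply i j).symm ▸ (star_star _).symm]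
    exact Complex.mul_conj _
  simp only [Matrix.trace, Matrix.diag, Matrix.mul_apply, this]
  push_cast
  rfl

lemma herm_trace_sq_re_nonneg {n : ℕ} {H : Matrix (Fin n) (Fin n) ℂ} (hH : H.IsHermitian) :
    0 ≤ (Matrix.trace (H ^ 2)).re := by
  rw [herm_trace_sq hH, Complex.ofReal_re]
  exact Finset.sum_nonneg fun i _ => Finset.sum_nonneg fun j _ => Complex.normSq_nonneg _

lemma herm_trace_mul_real {n : ℕ} {A B : Matrix (Fin n) (Fin n) ℂ}
    (hA : A.IsHermitian) (hB : B.IsHermitian) :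
    Matrix.trace (A * B) = (((Matrix.trace (A * B)).re : ℝ) : ℂ) := by
  have : (starRingEnd ℂ) (Matrix.trace (A * B)) = Matrix.trace (A * B) := by
    show star (Matrix.trace (A * B)) = _
    rw [← Matrix.trace_conjTranspose, Matrix.conjTranspose_mul, hA.eq, hB.eq,
      Matrix.trace_mul_comm]
  exact (Complex.conj_eq_iff_re.mp this).symm

lemma herm_cauchy_schwarz {n : ℕ} {A B : Matrix (Fin n) (Fin n) ℂ}
    (hA : A.IsHermitian) (hB : B.IsHermitian) :
    ((Matrix.trace (A * B)).re) ^ 2 ≤ (Matrix.trace (A ^ 2)).re * (Matrix.trace (B ^ 2)).re := by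
  set a := (Matrix.trace (B ^ 2)).re
  set b := (Matrix.trace (A * B)).re
  set c := (Matrix.trace (A ^ 2)).re
  have key : ∀ t : ℝ, 0 ≤ a * (t * t) + (2 * b) * t + c := by
    intro t
    have hsm : ((t : ℂ) • B).IsHermitian := by
      unfold Matrix.IsHermitian
      rw [Matrix.conjTranspose_smul, hB.eq]
      simp
    have hH : (A + (t : ℂ) • B).IsHermitian := hA.add hsm
    have h0 := herm_trace_sq_re_nonneg hH
    have hexp : Matrix.trace ((A + (t : ℂ) • B) ^ 2)
        = Matrix.trace (A ^ 2) + (t : ℂ) * Matrix.trace (A * B)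
          + (t : ℂ) * Matrix.trace (B * A) + ((t : ℂ) * t) * Matrix.trace (B ^ 2) := by
      rw [pow_two, add_mul, mul_add, mul_add, pow_two, pow_two]
      simp [Matrix.smul_mul, Matrix.mul_smul, Matrix.trace_add, Matrix.trace_smul,
        smul_smul, smul_eq_mul]
      ring
    have hba : Matrix.trace (B * A) = Matrix.trace (A * B) := Matrix.trace_mul_comm B A
    rw [hexp, hba] at h0
    simp only [Complex.add_re, Complex.mul_re, Complex.ofReal_re, Complex.ofReal_im,
      Complex.mul_im] at h0
    nlinarith [h0]
  have hd := discrim_le_zero key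
  rw [discrim] at hd
  nlinarith [hd]

lemma tr_sq_comm {n : ℕ} (A B : Matrix (Fin n) (Fin n) ℂ) :
    Matrix.trace ((A * B) ^ 2) = Matrix.trace ((B * A) ^ 2) := by
  rw [pow_two, pow_two]
  simp only [Matrix.mul_assoc]
  rw [Matrix.trace_mul_comm A]
  simp only [Matrix.mul_assoc]

/-- The dual norm of the local norm `∥·∥_ρ`: the supremum of `|tr(Xτ)|` over Hermitian `τ`
with `∥τ∥_ρ = 1` equals `sqrt(tr((ρ^{1/2} X ρ^{1/2})²))`, which equals `sqrt(tr((ρX)²))`. -/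
theorem stmt_3 {d : ℕ} (hd : 0 < d) (ρ X : Matrix (Fin d) (Fin d) ℂ)
    (hρ : ρ.PosDef) (hX : X.IsHermitian) :
    sSup {r : ℝ | ∃ τ : Matrix (Fin d) (Fin d) ℂ, τ.IsHermitian ∧
        Real.sqrt ((Matrix.trace (((hρ.posSemidef.sqrt)⁻¹ * τ * (hρ.posSemidef.sqrt)⁻¹) ^ 2)).re) = 1 ∧
        r = ‖Matrix.trace (X * τ)‖}
      = Real.sqrt ((Matrix.trace ((hρ.posSemidef.sqrt * X * hρ.posSemidef.sqrt) ^ 2)).re) ∧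
    Real.sqrt ((Matrix.trace ((hρ.posSemidef.sqrt * X * hρ.posSemidef.sqrt) ^ 2)).re)
      = Real.sqrt ((Matrix.trace ((ρ * X) ^ 2)).re) := by
  set S := hρ.posSemidef.sqrt with hSdef
  have hSH : S.IsHermitian := hρ.posSemidef.sqrt_isHermitian'
  have hSS : S * S = ρ := hρ.posSemidef.sqrt_mul_self
  have hdet : IsUnit S.det := by
    have h1 : S.det * S.det = ρ.det := by rw [← Matrix.det_mul, hSS]
    have h2 : ρ.det ≠ 0 := hρ.det_pos.ne'
    exact isUnit_iff_ne_zero.mpr (fun h => h2 (by rw [← h1, h, mul_zero]))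
  have hinv1 : S * S⁻¹ = 1 := Matrix.mul_nonsing_inv S hdet
  have hinv2 : S⁻¹ * S = 1 := Matrix.nonsing_inv_mul S hdet
  have hSinvH : S⁻¹.IsHermitian := hSH.inv
  set Y := S * X * S with hYdef
  have hY : Y.IsHermitian := by
    unfold Matrix.IsHermitian
    simp [hYdef, Matrix.conjTranspose_mul, hSH.eq, hX.eq, Matrix.mul_assoc]
  set T := (Matrix.trace (Y ^ 2)).re with hTdef
  have hT0 : 0 ≤ T := herm_trace_sq_re_nonneg hY
  set M := Real.sqrt T with hMdef
  -- the cyclic trace identity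
  have hcyc : ∀ σ : Matrix (Fin d) (Fin d) ℂ,
      Matrix.trace (X * (S * σ * S)) = Matrix.trace (Y * σ) := by
    intro σ
    rw [hYdef]
    simp only [Matrix.mul_assoc]
    rw [Matrix.trace_mul_comm S (X * (S * σ))]
    simp only [Matrix.mul_assoc]
  -- recovering τ from σ
  have hrec : ∀ τ : Matrix (Fin d) (Fin d) ℂ, S * (S⁻¹ * τ * S⁻¹) * S = τ := by
    intro τ
    calc S * (S⁻¹ * τ * S⁻¹) * S = (S * S⁻¹) * τ * (S⁻¹ * S) := by
          simp only [Matrix.mul_assoc]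
      _ = τ := by rw [hinv1, hinv2, Matrix.one_mul, Matrix.mul_one]
  have hrec2 : ∀ τ : Matrix (Fin d) (Fin d) ℂ, S⁻¹ * (S * τ * S) * S⁻¹ = τ := by
    intro τ
    calc S⁻¹ * (S * τ * S) * S⁻¹ = (S⁻¹ * S) * τ * (S * S⁻¹) := by
          simp only [Matrix.mul_assoc]
      _ = τ := by rw [hinv1, hinv2, Matrix.one_mul, Matrix.mul_one]
  -- upper bound
  have hub : ∀ r ∈ {r : ℝ | ∃ τ : Matrix (Fin d) (Fin d) ℂ, τ.IsHermitian ∧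
        Real.sqrt ((Matrix.trace ((S⁻¹ * τ * S⁻¹) ^ 2)).re) = 1 ∧
        r = ‖Matrix.trace (X * τ)‖}, r ≤ M := by
    rintro r ⟨τ, hτ, hnorm, rfl⟩
    set σ := S⁻¹ * τ * S⁻¹ with hσdef
    have hσH : σ.IsHermitian := by
      unfold Matrix.IsHermitian
      simp [hσdef, Matrix.conjTranspose_mul, hSinvH.eq, hτ.eq, Matrix.mul_assoc]
    have hσ1 : (Matrix.trace (σ ^ 2)).re = 1 := Real.sqrt_eq_one.mp hnorm
    have hτσ : τ = S * σ * S := (hrec τ).symm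
    have htr : Matrix.trace (X * τ) = Matrix.trace (Y * σ) := by
      rw [hτσ]; exact hcyc σ
    have hreal := herm_trace_mul_real hY hσH
    have hcs := herm_cauchy_schwarz hY hσH
    rw [hσ1, mul_one] at hcs
    have habs : ‖Matrix.trace (X * τ)‖ = |(Matrix.trace (Y * σ)).re| := by
      rw [htr, hreal, Complex.norm_real, Real.norm_eq_abs, Complex.ofReal_re]
    rw [habs, hMdef, ← Real.sqrt_sq_eq_abs]
    exact Real.sqrt_le_sqrt hcs
  -- membership of M
  have hmem : M ∈ {r : ℝ | ∃ τ : Matrix (Fin d) (Fin d) ℂ, τ.IsHermitian ∧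
        Real.sqrt ((Matrix.trace ((S⁻¹ * τ * S⁻¹) ^ 2)).re) = 1 ∧
        r = ‖Matrix.trace (X * τ)‖} := by
    by_cases hY0 : Y = 0
    · -- then X = 0 and M = 0
      have hX0 : X = 0 := by
        have : S⁻¹ * Y * S⁻¹ = X := by
          rw [hYdef]
          calc S⁻¹ * (S * X * S) * S⁻¹ = (S⁻¹ * S) * X * (S * S⁻¹) := by
                simp only [Matrix.mul_assoc]
            _ = X := by rw [hinv1, hinv2, Matrix.one_mul, Matrix.mul_one]
        rw [← this, hY0, Matrix.mul_zero, Matrix.zero_mul]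
      have hM0 : M = 0 := by
        rw [hMdef, hTdef, hY0]
        simp
      set i : Fin d := ⟨0, hd⟩
      refine ⟨S * Matrix.single i i 1 * S, ?_, ?_, ?_⟩
      · unfold Matrix.IsHermitian
        have hE : (Matrix.single i i (1:ℂ)).IsHermitian := by
          unfold Matrix.IsHermitian
          ext a b
          simp [Matrix.single, Matrix.conjTranspose_apply, and_comm]
        simp [Matrix.conjTranspose_mul, hSH.eq, hE.eq, Matrix.mul_assoc]
      · rw [hrec2]
        have : Matrix.single i i (1:ℂ) ^ 2 = Matrix.single i i 1 := by
          rw [pow_two, Matrix.single_mul_single_same, mul_one]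
        rw [this]
        have : Matrix.trace (Matrix.single i i (1:ℂ)) = 1 := by
          simp [Matrix.trace, Matrix.diag, Matrix.single]
        rw [this]
        simp
      · rw [hX0, hM0]
        simp
    · -- Y ≠ 0, T > 0
      have hTpos : 0 < T := by
        rcases lt_or_eq_of_le hT0 with h | h
        · exact h
        · exfalso
          apply hY0
          have hsum : (∑ a, ∑ b, Complex.normSq (Y a b)) = 0 := by
            have := herm_trace_sq hY
            have : T = ∑ a, ∑ b, Complex.normSq (Y a b) := by
              rw [hTdef, this, Complex.ofReal_re]
            rw [← this, ← h]
          ext a b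
          have h1 : ∀ a ∈ Finset.univ, (0:ℝ) ≤ ∑ b, Complex.normSq (Y a b) :=
            fun a _ => Finset.sum_nonneg fun b _ => Complex.normSq_nonneg _
          have h2 := (Finset.sum_eq_zero_iff_of_nonneg h1).mp hsum a (Finset.mem_univ a)
          have h3 := (Finset.sum_eq_zero_iff_of_nonneg
            (fun b _ => Complex.normSq_nonneg (Y a b))).mp h2 b (Finset.mem_univ b)
          simpa using Complex.normSq_eq_zero.mp h3
      have hMpos : 0 < M := Real.sqrt_pos.mpr hTpos
      refine ⟨((M⁻¹ : ℝ) : ℂ) • (S * Y * S), ?_, ?_, ?_⟩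
      · unfold Matrix.IsHermitian
        rw [Matrix.conjTranspose_smul]
        simp [Matrix.conjTranspose_mul, hSH.eq, hY.eq, Matrix.mul_assoc]
      · have hsc : S⁻¹ * (((M⁻¹ : ℝ) : ℂ) • (S * Y * S)) * S⁻¹
            = ((M⁻¹ : ℝ) : ℂ) • Y := by
          rw [Matrix.mul_smul, Matrix.smul_mul, hrec2]
        rw [hsc, smul_pow, Matrix.trace_smul, smul_eq_mul]
        have : ((((M⁻¹ : ℝ) : ℂ) ^ 2) * Matrix.trace (Y ^ 2)).re
            = (M⁻¹) ^ 2 * T := by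
          rw [hTdef]
          simp [Complex.mul_re, ← Complex.ofReal_pow]
        rw [this, Real.sqrt_mul (sq_nonneg M⁻¹) T,
          Real.sqrt_sq (inv_nonneg.mpr hMpos.le), ← hMdef]
        exact inv_mul_cancel₀ hMpos.ne'
      · have hv : Matrix.trace (X * (((M⁻¹ : ℝ) : ℂ) • (S * Y * S)))
            = ((M⁻¹ : ℝ) : ℂ) * Matrix.trace (Y * Y) := by
          rw [Matrix.mul_smul, Matrix.trace_smul, smul_eq_mul, hcyc Y]
        have hYY : Matrix.trace (Y * Y) = ((T : ℝ) : ℂ) := by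
          have := herm_trace_mul_real hY hY
          rw [this]
          congr 1
          rw [hTdef, pow_two]
        rw [hv, hYY, ← Complex.ofReal_mul, Complex.norm_real, Real.norm_eq_abs,
          abs_of_nonneg (by positivity)]
        rw [eq_comm, inv_mul_eq_div, div_eq_iff hMpos.ne', hMdef]
        exact (Real.mul_self_sqrt hT0).symm
  refine ⟨IsGreatest.csSup_eq ⟨hmem, hub⟩, ?_⟩
  have key : Matrix.trace (Y ^ 2) = Matrix.trace ((ρ * X) ^ 2) := by
    rw [hYdef, Matrix.mul_assoc, tr_sq_comm S (X * S), Matrix.mul_assoc, hSS, tr_sq_comm X ρ]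
  rw [hMdef, hTdef, key]
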